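/- Let R be a commutative ring, S ⊆ R a submonoid, and A ∈ R^{m×n}, b ∈ R^{1×n}. Then dom_{S⁻¹R}([b/1]_{A/1}) = { ρ ∈ S⁻¹R | ∃ y, y·(A/1) = ρ·(b/1) } equals the ideal of S⁻¹R generated by the image of dom_R([b]_A) = { r ∈ R | ∃ x, x·A = r·b } under the localization map. -/

import Mathlib

open Matrix

lemma unify_aux {R : Type*} [CommRing R] (S : Submonoid R) {n : ℕ}
    (x y : Fin n → R)
    (h : ∀ j, algebraMap R (Localization S) (x j) = algebraMap R (Localization S) (y j)) :
    ∃ c : S, ∀ j, (c : R) * x j = (c : R) * y j := by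
  have hc : ∀ j, ∃ c : S, (c : R) * x j = (c : R) * y j := fun j =>
    IsLocalization.exists_of_eq (M := S) (h j)
  choose c hcc using hc
  refine ⟨∏ j, c j, fun j => ?_⟩
  have hsplit : (∏ k, c k : S) = c j * ∏ k ∈ Finset.univ.erase j, c k := by
    rw [← Finset.mul_prod_erase _ _ (Finset.mem_univ j)]
  push_cast [hsplit]
  rw [mul_assoc, mul_assoc, mul_comm ((∏ k ∈ Finset.univ.erase j, c k : R)) (x j),
    mul_comm ((∏ k ∈ Finset.univ.erase j, c k : R)) (y j), ← mul_assoc, ← mul_assoc,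
    hcc j]

theorem stmt_18 {R : Type*} [CommRing R] (S : Submonoid R)
    {m n : ℕ} (A : Matrix (Fin m) (Fin n) R) (b : Fin n → R)
    (I : Ideal R) (hI : (I : Set R) = {r : R | ∃ x : Fin m → R, x ᵥ* A = r • b}) :
    {ρ : Localization S | ∃ y : Fin m → Localization S,
        y ᵥ* A.map (algebraMap R (Localization S)) =
          ρ • fun j => algebraMap R (Localization S) (b j)} =
      (I.map (algebraMap R (Localization S)) : Set (Localization S)) := by
  set φ := algebraMap R (Localization S) with hφ
  have hmem : ∀ r : R, r ∈ I ↔ ∃ x : Fin m → R, x ᵥ* A = r • b := by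
    intro r
    constructor
    · intro hr; rw [← SetLike.mem_coe, hI] at hr; exact hr
    · intro hr; rw [← SetLike.mem_coe, hI]; exact hr
  ext ρ
  constructor
  · rintro ⟨y, hy⟩
    -- clear denominators of y
    obtain ⟨s, hs⟩ := IsLocalization.exist_integer_multiples_of_finite S y
    choose x hx using hs
    obtain ⟨⟨r, t⟩, hrt⟩ := IsLocalization.surj (M := S) ρ
    -- φ x ᵥ* φ A = φ s • (y ᵥ* φA) = φ s * ρ • φ b
    have key : ∀ j, φ (((t : R) • x ᵥ* A) j) = φ ((s : R) * r * b j) := by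
      intro j
      have h1 : ((fun i => φ ((t : R) * x i)) ᵥ* A.map φ) j
          = φ (t : R) * φ (s : R) * (ρ * φ (b j)) := by
        have h2 : (fun i => φ ((t : R) * x i)) = fun i => (φ (t : R) * φ (s : R)) • y i := by
          funext i
          rw [smul_eq_mul, _root_.map_mul, mul_assoc]
          congr 1
          rw [hx i, Algebra.smul_def]
        rw [h2]
        have h3 : ((fun i => (φ (t : R) * φ (s : R)) • y i) ᵥ* A.map φ) j
            = (φ (t : R) * φ (s : R)) * ((y ᵥ* A.map φ) j) := by
          simp [Matrix.vecMul, dotProduct, Finset.mul_sum, mul_assoc, smul_eq_mul]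
        rw [h3, hy]
        simp only [Pi.smul_apply, smul_eq_mul]
      calc φ (((t : R) • x ᵥ* A) j)
          = ((fun i => φ ((t : R) * x i)) ᵥ* A.map φ) j := by
            simp only [Pi.smul_apply, smul_eq_mul, Matrix.vecMul, dotProduct,
              Matrix.map_apply, map_sum, _root_.map_mul, Finset.mul_sum, mul_assoc]
        _ = φ (t : R) * φ (s : R) * (ρ * φ (b j)) := h1
        _ = φ (s : R) * (ρ * φ (t : R)) * φ (b j) := by ring
        _ = φ ((s : R) * r * b j) := by
              have hrt' : ρ * φ (t : R) = φ r := hrt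
              rw [hrt']; simp only [_root_.map_mul]
    obtain ⟨c, hc⟩ := unify_aux S _ _ key
    have hmemI : (c : R) * ((s : R) * r) ∈ I := by
      rw [hmem]
      refine ⟨(c : R) • ((t : R) • x), ?_⟩
      funext j
      have := hc j
      simp only [Matrix.smul_vecMul, Pi.smul_apply, smul_eq_mul] at this ⊢
      rw [this]; ring
    have hunit : IsUnit (φ ((c : R) * ((t : R) * (s : R)))) :=
      IsLocalization.map_units (M := S) _ ⟨_, mul_mem c.2 (mul_mem t.2 s.2)⟩
    have hρ : ρ * φ ((c : R) * ((t : R) * (s : R))) = φ ((c : R) * ((s : R) * r)) := by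
      have hrt' : ρ * φ (t : R) = φ r := hrt
      simp only [_root_.map_mul]
      rw [show ρ * (φ (c : R) * (φ (t : R) * φ (s : R)))
          = φ (c : R) * (φ (s : R) * (ρ * φ (t : R))) by ring, hrt']
    have : ρ = φ ((c : R) * ((s : R) * r)) * (hunit.unit⁻¹ : (Localization S)ˣ) := by
      rw [← hρ]
      rw [mul_assoc, IsUnit.mul_val_inv, mul_one]
    rw [this]
    exact Ideal.mul_mem_right _ _ (Ideal.mem_map_of_mem φ hmemI)
  · intro hρ
    refine Submodule.span_induction ?_ ⟨0, by funext j; simp⟩ ?_ ?_ hρ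
    · rintro _ ⟨r, hr, rfl⟩
      rw [SetLike.mem_coe, hmem] at hr
      obtain ⟨x, hx⟩ := hr
      refine ⟨fun i => φ (x i), ?_⟩
      funext j
      have h := congrFun hx j
      simp only [Matrix.vecMul, dotProduct, Pi.smul_apply, smul_eq_mul] at h
      simp only [Matrix.vecMul, dotProduct, Matrix.map_apply, Pi.smul_apply,
        smul_eq_mul, ← _root_.map_mul, ← map_sum, h]
    · rintro ρ₁ ρ₂ - - ⟨y₁, hy₁⟩ ⟨y₂, hy₂⟩
      refine ⟨y₁ + y₂, ?_⟩
      rw [Matrix.add_vecMul, hy₁, hy₂]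
      funext j; simp [smul_eq_mul]; ring
    · rintro a ρ₁ - ⟨y₁, hy₁⟩
      refine ⟨a • y₁, ?_⟩
      rw [Matrix.smul_vecMul, hy₁]
      funext j; simp [smul_eq_mul]; ring
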